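/- arXiv:1712.03772 — 2 statements merged into one kernel-verified Lean document; each statement's English description precedes it below -/
import Mathlib

section
/- For every x ∈ (0,1): ( x⁵/60 + 11x⁷/840 + 67x⁹/6720 + 3461x¹¹/443520 ) / (2+√(1−x²)) < arcsin x − 3x/(2+√(1−x²)) < ( x⁵/60 + 11x⁷/840 + 67x⁹/6720 + (π − 6809/2240)·x¹¹ ) / (2+√(1−x²)). -/
set_option maxHeartbeats 1000000

open Real

/-- Auxiliary: `arcsin y > y + y^3/6` for `0 < y ≤ 1`. -/
lemma arcsin_lb_aux {y : ℝ} (h0 : 0 < y) (h1 : y ≤ 1) :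
    y + y ^ 3 / 6 < Real.arcsin y := by
  have hmono : StrictMonoOn (fun t => t - (Real.sin t + Real.sin t ^ 3 / 6))
      (Set.Icc 0 (π / 2)) := by
    apply strictMonoOn_of_deriv_pos (convex_Icc _ _)
    · exact (continuous_id.sub ((Real.continuous_sin).add
        ((Real.continuous_sin.pow 3).div_const 6))).continuousOn
    · intro t ht
      rw [interior_Icc] at ht
      obtain ⟨ht0, ht2⟩ := ht
      have hd : HasDerivAt (fun t => t - (Real.sin t + Real.sin t ^ 3 / 6))
          (1 - (Real.cos t + (3 : ℝ) * Real.sin t ^ 2 * Real.cos t / 6)) t := by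
        have h := (hasDerivAt_id t).sub ((Real.hasDerivAt_sin t).add
          (((Real.hasDerivAt_sin t).pow 3).div_const 6))
        exact h.congr_deriv (by norm_num)
      rw [hd.deriv]
      have htpi : t < π := lt_trans ht2 (by linarith [Real.pi_pos])
      have hsin : 0 < Real.sin t := Real.sin_pos_of_pos_of_lt_pi ht0 htpi
      have hc0 : 0 < Real.cos t :=
        Real.cos_pos_of_mem_Ioo ⟨by linarith [Real.pi_pos], ht2⟩
      have hpyth := Real.sin_sq_add_cos_sq t
      have hc1 : Real.cos t < 1 := by nlinarith
      have hkey : 0 < (1 - Real.cos t) ^ 2 * (2 + Real.cos t) :=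
        mul_pos (pow_pos (by linarith) 2) (by linarith)
      nlinarith [hkey, hpyth, hc0]
  have hmem0 : (0 : ℝ) ∈ Set.Icc 0 (π / 2) := ⟨le_refl 0, by positivity⟩
  have hmemt : Real.arcsin y ∈ Set.Icc 0 (π / 2) :=
    ⟨Real.arcsin_nonneg.2 h0.le, Real.arcsin_le_pi_div_two y⟩
  have hlt : 0 < Real.arcsin y := Real.arcsin_pos.2 h0
  have hfin := hmono hmem0 hmemt hlt
  simp only [Real.sin_zero] at hfin
  rw [Real.sin_arcsin (by linarith) h1] at hfin
  norm_num at hfin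
  linarith

/-- Lower-bound derivative positivity: the polynomial certificate. -/
lemma El_pos (x s : ℝ) (hx0 : 0 < x) (hx1 : x < 1) (hs0 : 0 < s)
    (hs2 : s ^ 2 = 1 - x ^ 2) :
    0 < (2 + s) ^ 2
      - s * (3 + (5 * x ^ 4 / 60 + 11 * (7 * x ^ 6) / 840 + 67 * (9 * x ^ 8) / 6720
          + 3461 / 443520 * (11 * x ^ 10))) * (2 + s)
      - (3 * x + (x ^ 5 / 60 + 11 * x ^ 7 / 840 + 67 * x ^ 9 / 6720
          + 3461 / 443520 * x ^ 11)) * x := by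
  obtain ⟨A, hA_def⟩ : ∃ a : ℝ, a = 2 - x ^ 2 - x ^ 4 / 12 - x ^ 6 / 40 - 5 * x ^ 8 / 448
      - 7 * x ^ 10 / 1152 + 3461 * x ^ 12 / 44352 := ⟨_, rfl⟩
  obtain ⟨B, hB_def⟩ : ∃ b : ℝ, b = 2 + x ^ 4 / 6 + 11 * x ^ 6 / 60 + 201 * x ^ 8 / 1120
      + 3461 * x ^ 10 / 20160 := ⟨_, rfl⟩
  have hx2 : x ^ 2 ≤ 1 := by nlinarith
  have hx4 : x ^ 4 ≤ 1 := by nlinarith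
  have hx6 : x ^ 6 ≤ 1 := by nlinarith
  have hx8 : x ^ 8 ≤ 1 := by nlinarith
  have hx10 : x ^ 10 ≤ 1 := by nlinarith
  have hx12nn : (0:ℝ) ≤ x ^ 12 := by positivity
  have hA : 0 < A := by rw [hA_def]; linarith
  have hB : 0 < B := by rw [hB_def]; positivity
  have hR : 0 < (29011 : ℝ) / 29568 - 8165 / 44352 * x ^ 2 + 217093 / 14192640 * x ^ 4
      + 253507 / 8515584 * x ^ 6 + 7258445 / 238436352 * x ^ 8
      + 7084667 / 248371200 * x ^ 10 + 11978521 / 1967099904 * x ^ 12 := by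
    have h4 : (0:ℝ) ≤ x ^ 4 := by positivity
    have h6 : (0:ℝ) ≤ x ^ 6 := by positivity
    have h8 : (0:ℝ) ≤ x ^ 8 := by positivity
    have h10 : (0:ℝ) ≤ x ^ 10 := by positivity
    linarith
  have hGs : 0 < A ^ 2 - s ^ 2 * B ^ 2 := by
    rw [hA_def, hB_def, hs2]
    calc (0:ℝ) < x ^ 12 * ((29011 : ℝ) / 29568 - 8165 / 44352 * x ^ 2
          + 217093 / 14192640 * x ^ 4 + 253507 / 8515584 * x ^ 6
          + 7258445 / 238436352 * x ^ 8 + 7084667 / 248371200 * x ^ 10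
          + 11978521 / 1967099904 * x ^ 12) := mul_pos (by positivity) hR
      _ = _ := by ring
  have hid : (2 + s) ^ 2
      - s * (3 + (5 * x ^ 4 / 60 + 11 * (7 * x ^ 6) / 840 + 67 * (9 * x ^ 8) / 6720
          + 3461 / 443520 * (11 * x ^ 10))) * (2 + s)
      - (3 * x + (x ^ 5 / 60 + 11 * x ^ 7 / 840 + 67 * x ^ 9 / 6720
          + 3461 / 443520 * x ^ 11)) * x = A - s * B := by
    rw [hA_def, hB_def]
    linear_combination (-2 - (x ^ 4 / 12 + 11 * x ^ 6 / 120 + 201 * x ^ 8 / 2240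
      + 3461 * x ^ 10 / 40320)) * hs2
  rw [hid]
  by_contra hc
  push_neg at hc
  have hsB : 0 < s * B := mul_pos hs0 hB
  have h1 : 0 < A + s * B := by linarith
  have h2 : (A - s * B) * (A + s * B) ≤ 0 :=
    mul_nonpos_of_nonpos_of_nonneg (by linarith) h1.le
  have h3 : (A - s * B) * (A + s * B) = A ^ 2 - s ^ 2 * B ^ 2 := by ring
  rw [h3] at h2
  linarith

/-- Upper-bound region 1 derivative positivity. -/
lemma Eu_pos (x s : ℝ) (hx0 : 0 < x) (hx1 : x ≤ 19 / 20) (hs0 : 0 < s)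
    (hs2 : s ^ 2 = 1 - x ^ 2) :
    0 < s * (3 + (5 * x ^ 4 / 60 + 11 * (7 * x ^ 6) / 840 + 67 * (9 * x ^ 8) / 6720
          + (π - 6809 / 2240) * (11 * x ^ 10))) * (2 + s)
      + (3 * x + (x ^ 5 / 60 + 11 * x ^ 7 / 840 + 67 * x ^ 9 / 6720
          + (π - 6809 / 2240) * x ^ 11)) * x - (2 + s) ^ 2 := by
  have hpi := Real.pi_gt_d6
  have hp : (0:ℝ) ≤ π - 6809 / 2240 - 713019 / 7000000 := by
    norm_num at hpi ⊢; linarith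
  have hstep : 0 ≤ (π - 6809 / 2240 - 713019 / 7000000)
      * (s * (11 * x ^ 10) * (2 + s) + x ^ 12) := by
    apply mul_nonneg hp; positivity
  obtain ⟨A, hA_def⟩ : ∃ a : ℝ, a = 2 - x ^ 2 - x ^ 4 / 12 - x ^ 6 / 40 - 5 * x ^ 8 / 448
      - 21854627 * x ^ 10 / 21000000 + 713019 * x ^ 12 / 700000 := ⟨_, rfl⟩
  obtain ⟨B, hB_def⟩ : ∃ b : ℝ, b = 2 + x ^ 4 / 6 + 11 * x ^ 6 / 60 + 201 * x ^ 8 / 1120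
      + 7843209 * x ^ 10 / 3500000 := ⟨_, rfl⟩
  have hB : 0 < B := by rw [hB_def]; positivity
  have hv : (0:ℝ) ≤ 361 / 400 - x ^ 2 := by nlinarith
  have hb0 : (0:ℝ) ≤ (361 / 400 - x ^ 2) ^ 7 := by positivity
  have hb1 : (0:ℝ) ≤ x ^ 2 * (361 / 400 - x ^ 2) ^ 6 :=
    mul_nonneg (by positivity) (by positivity)
  have hb2 : (0:ℝ) ≤ x ^ 4 * (361 / 400 - x ^ 2) ^ 5 :=
    mul_nonneg (by positivity) (by positivity)
  have hb3 : (0:ℝ) ≤ x ^ 6 * (361 / 400 - x ^ 2) ^ 4 :=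
    mul_nonneg (by positivity) (by positivity)
  have hb4 : (0:ℝ) ≤ x ^ 8 * (361 / 400 - x ^ 2) ^ 3 :=
    mul_nonneg (by positivity) (by positivity)
  have hb5 : (0:ℝ) ≤ x ^ 10 * (361 / 400 - x ^ 2) ^ 2 :=
    mul_nonneg (by positivity) (by positivity)
  have hb6 : (0:ℝ) ≤ x ^ 12 * (361 / 400 - x ^ 2) :=
    mul_nonneg (by positivity) hv
  have hb7 : (0:ℝ) < x ^ 14 := by positivity
  have hHt : 0 < (130362137 : ℝ) / 10500000 - 25350559 / 1680000 * x ^ 2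
      + 650798317 / 252000000 * x ^ 4 + 1066518619 / 6720000000 * x ^ 6
      - 513859373 / 23520000000 * x ^ 8 + 1392266368389887 / 441000000000000 * x ^ 10
      - 17772326801413 / 6125000000000 * x ^ 12 - 508396094361 / 490000000000 * x ^ 14 := by
    nlinarith [hb0, hb1, hb2, hb3, hb4, hb5, hb6, hb7]
  have hGs : 0 < s ^ 2 * B ^ 2 - A ^ 2 := by
    rw [hA_def, hB_def, hs2]
    calc (0:ℝ) < x ^ 10 * ((130362137 : ℝ) / 10500000 - 25350559 / 1680000 * x ^ 2
          + 650798317 / 252000000 * x ^ 4 + 1066518619 / 6720000000 * x ^ 6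
          - 513859373 / 23520000000 * x ^ 8 + 1392266368389887 / 441000000000000 * x ^ 10
          - 17772326801413 / 6125000000000 * x ^ 12
          - 508396094361 / 490000000000 * x ^ 14) := mul_pos (by positivity) hHt
      _ = _ := by ring
  have hE0 : 0 < s * (3 + (5 * x ^ 4 / 60 + 11 * (7 * x ^ 6) / 840 + 67 * (9 * x ^ 8) / 6720
          + 713019 / 7000000 * (11 * x ^ 10))) * (2 + s)
      + (3 * x + (x ^ 5 / 60 + 11 * x ^ 7 / 840 + 67 * x ^ 9 / 6720
          + 713019 / 7000000 * x ^ 11)) * x - (2 + s) ^ 2 := by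
    have hid : s * (3 + (5 * x ^ 4 / 60 + 11 * (7 * x ^ 6) / 840 + 67 * (9 * x ^ 8) / 6720
          + 713019 / 7000000 * (11 * x ^ 10))) * (2 + s)
        + (3 * x + (x ^ 5 / 60 + 11 * x ^ 7 / 840 + 67 * x ^ 9 / 6720
          + 713019 / 7000000 * x ^ 11)) * x - (2 + s) ^ 2 = s * B - A := by
      rw [hA_def, hB_def]
      linear_combination (2 + (x ^ 4 / 12 + 11 * x ^ 6 / 120 + 201 * x ^ 8 / 2240
        + 7843209 * x ^ 10 / 7000000)) * hs2
    rw [hid]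
    have hsB : 0 < s * B := mul_pos hs0 hB
    by_contra hc
    push_neg at hc
    have h1 : 0 < s * B + A := by linarith
    have h2 : (s * B - A) * (s * B + A) ≤ 0 :=
      mul_nonpos_of_nonpos_of_nonneg (by linarith) h1.le
    have h3 : (s * B - A) * (s * B + A) = s ^ 2 * B ^ 2 - A ^ 2 := by ring
    rw [h3] at h2
    linarith
  nlinarith [hE0, hstep]

/-- Upper-bound region 2: the key polynomial inequality. -/
lemma W_pos (x s : ℝ) (hx0 : 19 / 20 ≤ x) (hx1 : x < 1) (hs0 : 0 < s)
    (hs2 : s ^ 2 = 1 - x ^ 2) :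
    0 < 3 * x + (x ^ 5 / 60 + 11 * x ^ 7 / 840 + 67 * x ^ 9 / 6720
        + (π - 6809 / 2240) * x ^ 11) - (π / 2 - s - s ^ 3 / 6) * (2 + s) := by
  have hpi := Real.pi_lt_d6
  have hπu : π < 3141593 / 1000000 := by norm_num at hpi ⊢; linarith
  have hxpos : (0:ℝ) < x := by linarith
  have hx2 : x ^ 2 ≤ 1 := by nlinarith
  have hx3 : x ^ 3 ≤ 1 := by nlinarith
  have hx4 : x ^ 4 ≤ 1 := by nlinarith
  have hx5 : x ^ 5 ≤ 1 := by nlinarith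
  have hx6 : x ^ 6 ≤ 1 := by nlinarith
  have hx7 : x ^ 7 ≤ 1 := by nlinarith
  have hx8 : x ^ 8 ≤ 1 := by nlinarith
  have hx9 : x ^ 9 ≤ 1 := by nlinarith
  have hx10 : x ^ 10 ≤ 1 := by nlinarith
  have hx11 : x ^ 11 ≤ 1 := by nlinarith
  have hstep : 0 ≤ (3141593 / 1000000 - π) * ((2 + s) / 2 - x ^ 11) := by
    apply mul_nonneg (by linarith); linarith
  obtain ⟨at', hat_def⟩ : ∃ a : ℝ, a = -5924779 / 3000000 + 3075221 * x / 3000000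
      - 924779 * x ^ 2 / 3000000 - 924779 * x ^ 3 / 3000000 - 141593 * x ^ 4 / 1000000
      - 374779 * x ^ 5 / 3000000 - 374779 * x ^ 6 / 3000000 - 2348453 * x ^ 7 / 21000000
      - 2348453 * x ^ 8 / 21000000 - 356513 * x ^ 9 / 3500000
      - 356513 * x ^ 10 / 3500000 := ⟨_, rfl⟩
  obtain ⟨bt, hbt_def⟩ : ∃ b : ℝ, b = 858407 / 2000000 + (1 - x ^ 2) / 3 := ⟨_, rfl⟩
  have hat : -1023311207 / 420000000 ≤ at' := by rw [hat_def]; linarith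
  have hbt : 858407 / 2000000 ≤ bt := by rw [hbt_def]; linarith
  have hbtpos : 0 < bt := by linarith
  have hsle : s ≤ 313 / 1000 := by nlinarith
  have hin : 0 < s * at' + (1 + x) * bt := by
    have h1 : 0 ≤ s * (at' + 1023311207 / 420000000) :=
      mul_nonneg hs0.le (by linarith)
    have h2 : 0 ≤ (x - 19 / 20) * bt := mul_nonneg (by linarith) hbtpos.le
    nlinarith [h1, h2, hbt, hsle, hs0]
  have hid : (1 + x) * (3 * x + (x ^ 5 / 60 + 11 * x ^ 7 / 840 + 67 * x ^ 9 / 6720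
        + (3141593 / 1000000 - 6809 / 2240) * x ^ 11)
        - (3141593 / 1000000 / 2 - s - s ^ 3 / 6) * (2 + s))
      = s * (s * at' + (1 + x) * bt) := by
    rw [hat_def, hbt_def]
    linear_combination ((1 + x) * (1 + s / 3 + (s ^ 2 + 1 - x ^ 2) / 6)
      - (-5924779 / 3000000 + 3075221 * x / 3000000
      - 924779 * x ^ 2 / 3000000 - 924779 * x ^ 3 / 3000000 - 141593 * x ^ 4 / 1000000
      - 374779 * x ^ 5 / 3000000 - 374779 * x ^ 6 / 3000000 - 2348453 * x ^ 7 / 21000000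
      - 2348453 * x ^ 8 / 21000000 - 356513 * x ^ 9 / 3500000
      - 356513 * x ^ 10 / 3500000)) * hs2
  have hW0 : 0 < 3 * x + (x ^ 5 / 60 + 11 * x ^ 7 / 840 + 67 * x ^ 9 / 6720
        + (3141593 / 1000000 - 6809 / 2240) * x ^ 11)
      - (3141593 / 1000000 / 2 - s - s ^ 3 / 6) * (2 + s) := by
    have hpos := mul_pos hs0 hin
    rw [← hid] at hpos
    by_contra hc
    push_neg at hc
    have : (1 + x) * (3 * x + (x ^ 5 / 60 + 11 * x ^ 7 / 840 + 67 * x ^ 9 / 6720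
        + (3141593 / 1000000 - 6809 / 2240) * x ^ 11)
        - (3141593 / 1000000 / 2 - s - s ^ 3 / 6) * (2 + s)) ≤ 0 :=
      mul_nonpos_of_nonneg_of_nonpos (by linarith) hc
    linarith
  nlinarith [hW0, hstep]

/-- Derivative of the algebraic part. -/
lemma hasDerivAt_G (a t : ℝ) (h0 : -1 < t) (h1 : t < 1) :
    HasDerivAt (fun y => (3 * y + (y ^ 5 / 60 + 11 * y ^ 7 / 840 + 67 * y ^ 9 / 6720
        + a * y ^ 11)) / (2 + Real.sqrt (1 - y ^ 2)))
      (((3 + (5 * t ^ 4 / 60 + 11 * (7 * t ^ 6) / 840 + 67 * (9 * t ^ 8) / 6720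
          + a * (11 * t ^ 10))) * (2 + Real.sqrt (1 - t ^ 2))
        - (3 * t + (t ^ 5 / 60 + 11 * t ^ 7 / 840 + 67 * t ^ 9 / 6720 + a * t ^ 11))
          * (-(2 * t) / (2 * Real.sqrt (1 - t ^ 2)))) / (2 + Real.sqrt (1 - t ^ 2)) ^ 2) t := by
  have h1t : 0 < 1 - t ^ 2 := by nlinarith
  have hsqrt_pos : 0 < Real.sqrt (1 - t ^ 2) := Real.sqrt_pos.2 h1t
  have hden : (0:ℝ) < 2 + Real.sqrt (1 - t ^ 2) := by positivity
  have hinner : HasDerivAt (fun y : ℝ => 1 - y ^ 2) (-(2 * t)) t := by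
    have h := (hasDerivAt_pow 2 t).const_sub (1 : ℝ)
    exact h.congr_deriv (by norm_num)
  have hs : HasDerivAt (fun y : ℝ => Real.sqrt (1 - y ^ 2))
      (-(2 * t) / (2 * Real.sqrt (1 - t ^ 2))) t := hinner.sqrt (ne_of_gt h1t)
  have hD : HasDerivAt (fun y : ℝ => 2 + Real.sqrt (1 - y ^ 2))
      (-(2 * t) / (2 * Real.sqrt (1 - t ^ 2))) t := hs.const_add 2
  have hN : HasDerivAt (fun y : ℝ => 3 * y + (y ^ 5 / 60 + 11 * y ^ 7 / 840
      + 67 * y ^ 9 / 6720 + a * y ^ 11))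
      (3 + (5 * t ^ 4 / 60 + 11 * (7 * t ^ 6) / 840 + 67 * (9 * t ^ 8) / 6720
        + a * (11 * t ^ 10))) t := by
    have h := ((hasDerivAt_id t).const_mul (3:ℝ)).add
      ((((hasDerivAt_pow 5 t).div_const 60).add
        (((hasDerivAt_pow 7 t).const_mul (11:ℝ)).div_const 840)).add
       ((((hasDerivAt_pow 9 t).const_mul (67:ℝ)).div_const 6720).add
        ((hasDerivAt_pow 11 t).const_mul a)))
    refine (h.congr_deriv ?_).congr_of_eventuallyEq (Filter.Eventually.of_forall fun y => ?_)
    · norm_num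
      ring
    · simp only [Pi.add_apply, id_eq]
      ring
  exact hN.div hD (ne_of_gt hden)

theorem shaferE_n5 (x : ℝ) (hx : x ∈ Set.Ioo (0 : ℝ) 1) :
    (x ^ 5 / 60 + 11 * x ^ 7 / 840 + 67 * x ^ 9 / 6720 + 3461 * x ^ 11 / 443520)
        / (2 + Real.sqrt (1 - x ^ 2))
      < Real.arcsin x - 3 * x / (2 + Real.sqrt (1 - x ^ 2)) ∧
    Real.arcsin x - 3 * x / (2 + Real.sqrt (1 - x ^ 2))
      < (x ^ 5 / 60 + 11 * x ^ 7 / 840 + 67 * x ^ 9 / 6720 + (π - 6809 / 2240) * x ^ 11)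
        / (2 + Real.sqrt (1 - x ^ 2)) := by
  obtain ⟨hx0, hx1⟩ := hx
  have hsx2 : 0 < 1 - x ^ 2 := by nlinarith
  have hsx : 0 < Real.sqrt (1 - x ^ 2) := Real.sqrt_pos.2 hsx2
  have hdenx : (0:ℝ) < 2 + Real.sqrt (1 - x ^ 2) := by positivity
  have hcontG : ∀ a : ℝ, Continuous (fun y : ℝ => (3 * y + (y ^ 5 / 60 + 11 * y ^ 7 / 840
      + 67 * y ^ 9 / 6720 + a * y ^ 11)) / (2 + Real.sqrt (1 - y ^ 2))) := by
    intro a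
    apply Continuous.div
    · continuity
    · exact continuous_const.add ((continuous_const.sub (continuous_pow 2)).sqrt)
    · intro y
      have : 0 ≤ Real.sqrt (1 - y ^ 2) := Real.sqrt_nonneg _
      positivity
  constructor
  · -- LOWER BOUND
    have hmono : StrictMonoOn (fun t => Real.arcsin t
        - (3 * t + (t ^ 5 / 60 + 11 * t ^ 7 / 840 + 67 * t ^ 9 / 6720
          + 3461 / 443520 * t ^ 11)) / (2 + Real.sqrt (1 - t ^ 2))) (Set.Ico 0 1) := by
      apply strictMonoOn_of_deriv_pos (convex_Ico _ _)
      · exact (Real.continuous_arcsin.sub (hcontG (3461 / 443520))).continuousOn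
      · intro t ht
        rw [interior_Ico] at ht
        obtain ⟨ht0, ht1⟩ := ht
        have h1t : 0 < 1 - t ^ 2 := by nlinarith
        have hst : 0 < Real.sqrt (1 - t ^ 2) := Real.sqrt_pos.2 h1t
        have hden2 : (0:ℝ) < 2 + Real.sqrt (1 - t ^ 2) := by positivity
        have hd : HasDerivAt (fun t => Real.arcsin t
            - (3 * t + (t ^ 5 / 60 + 11 * t ^ 7 / 840 + 67 * t ^ 9 / 6720
              + 3461 / 443520 * t ^ 11)) / (2 + Real.sqrt (1 - t ^ 2)))
            (1 / Real.sqrt (1 - t ^ 2)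
              - ((3 + (5 * t ^ 4 / 60 + 11 * (7 * t ^ 6) / 840 + 67 * (9 * t ^ 8) / 6720
                  + 3461 / 443520 * (11 * t ^ 10))) * (2 + Real.sqrt (1 - t ^ 2))
                - (3 * t + (t ^ 5 / 60 + 11 * t ^ 7 / 840 + 67 * t ^ 9 / 6720
                  + 3461 / 443520 * t ^ 11))
                  * (-(2 * t) / (2 * Real.sqrt (1 - t ^ 2)))) / (2 + Real.sqrt (1 - t ^ 2)) ^ 2)
            t :=
          (Real.hasDerivAt_arcsin (ne_of_gt (show t > -1 by linarith))
            (ne_of_lt ht1)).sub (hasDerivAt_G (3461 / 443520) t (by linarith) ht1)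
        rw [hd.deriv]
        have hkey := El_pos t (Real.sqrt (1 - t ^ 2)) ht0 ht1 hst
          (Real.sq_sqrt h1t.le)
        have hval : 1 / Real.sqrt (1 - t ^ 2)
              - ((3 + (5 * t ^ 4 / 60 + 11 * (7 * t ^ 6) / 840 + 67 * (9 * t ^ 8) / 6720
                  + 3461 / 443520 * (11 * t ^ 10))) * (2 + Real.sqrt (1 - t ^ 2))
                - (3 * t + (t ^ 5 / 60 + 11 * t ^ 7 / 840 + 67 * t ^ 9 / 6720
                  + 3461 / 443520 * t ^ 11))
                  * (-(2 * t) / (2 * Real.sqrt (1 - t ^ 2)))) / (2 + Real.sqrt (1 - t ^ 2)) ^ 2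
            = ((2 + Real.sqrt (1 - t ^ 2)) ^ 2
              - Real.sqrt (1 - t ^ 2) * (3 + (5 * t ^ 4 / 60 + 11 * (7 * t ^ 6) / 840
                  + 67 * (9 * t ^ 8) / 6720 + 3461 / 443520 * (11 * t ^ 10)))
                  * (2 + Real.sqrt (1 - t ^ 2))
              - (3 * t + (t ^ 5 / 60 + 11 * t ^ 7 / 840 + 67 * t ^ 9 / 6720
                  + 3461 / 443520 * t ^ 11)) * t)
              / (Real.sqrt (1 - t ^ 2) * (2 + Real.sqrt (1 - t ^ 2)) ^ 2) := by
          field_simp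
          ring
        rw [hval]
        exact div_pos hkey (by positivity)
    have h0mem : (0:ℝ) ∈ Set.Ico (0:ℝ) 1 := ⟨le_refl 0, by norm_num⟩
    have hxmem : x ∈ Set.Ico (0:ℝ) 1 := ⟨hx0.le, hx1⟩
    have hF := hmono h0mem hxmem hx0
    norm_num [Real.arcsin_zero, Real.sqrt_one] at hF
    have e1 : (3 * x + (x ^ 5 / 60 + 11 * x ^ 7 / 840 + 67 * x ^ 9 / 6720
        + 3461 / 443520 * x ^ 11)) / (2 + Real.sqrt (1 - x ^ 2))
        = 3 * x / (2 + Real.sqrt (1 - x ^ 2))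
          + (x ^ 5 / 60 + 11 * x ^ 7 / 840 + 67 * x ^ 9 / 6720 + 3461 * x ^ 11 / 443520)
            / (2 + Real.sqrt (1 - x ^ 2)) := by ring
    rw [e1] at hF
    linarith [hF]
  · -- UPPER BOUND
    rcases le_or_gt x (19 / 20) with hxsmall | hxbig
    · -- region 1 : monotone argument on [0, 19/20]
      have hmono : StrictMonoOn (fun t => (3 * t + (t ^ 5 / 60 + 11 * t ^ 7 / 840
          + 67 * t ^ 9 / 6720 + (π - 6809 / 2240) * t ^ 11)) / (2 + Real.sqrt (1 - t ^ 2))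
          - Real.arcsin t) (Set.Icc 0 (19 / 20)) := by
        apply strictMonoOn_of_deriv_pos (convex_Icc _ _)
        · exact ((hcontG (π - 6809 / 2240)).sub Real.continuous_arcsin).continuousOn
        · intro t ht
          rw [interior_Icc] at ht
          obtain ⟨ht0, ht1⟩ := ht
          have ht1' : t < 1 := by linarith
          have h1t : 0 < 1 - t ^ 2 := by nlinarith
          have hst : 0 < Real.sqrt (1 - t ^ 2) := Real.sqrt_pos.2 h1t
          have hden2 : (0:ℝ) < 2 + Real.sqrt (1 - t ^ 2) := by positivity
          have hd : HasDerivAt (fun t => (3 * t + (t ^ 5 / 60 + 11 * t ^ 7 / 840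
              + 67 * t ^ 9 / 6720 + (π - 6809 / 2240) * t ^ 11))
                / (2 + Real.sqrt (1 - t ^ 2)) - Real.arcsin t)
              (((3 + (5 * t ^ 4 / 60 + 11 * (7 * t ^ 6) / 840 + 67 * (9 * t ^ 8) / 6720
                  + (π - 6809 / 2240) * (11 * t ^ 10))) * (2 + Real.sqrt (1 - t ^ 2))
                - (3 * t + (t ^ 5 / 60 + 11 * t ^ 7 / 840 + 67 * t ^ 9 / 6720
                  + (π - 6809 / 2240) * t ^ 11))
                  * (-(2 * t) / (2 * Real.sqrt (1 - t ^ 2)))) / (2 + Real.sqrt (1 - t ^ 2)) ^ 2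
               - 1 / Real.sqrt (1 - t ^ 2)) t :=
            (hasDerivAt_G (π - 6809 / 2240) t (by linarith) ht1').sub
              (Real.hasDerivAt_arcsin (ne_of_gt (show t > -1 by linarith))
                (ne_of_lt ht1'))
          rw [hd.deriv]
          have hkey := Eu_pos t (Real.sqrt (1 - t ^ 2)) ht0 ht1.le hst
            (Real.sq_sqrt h1t.le)
          have hval : ((3 + (5 * t ^ 4 / 60 + 11 * (7 * t ^ 6) / 840 + 67 * (9 * t ^ 8) / 6720
                  + (π - 6809 / 2240) * (11 * t ^ 10))) * (2 + Real.sqrt (1 - t ^ 2))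
                - (3 * t + (t ^ 5 / 60 + 11 * t ^ 7 / 840 + 67 * t ^ 9 / 6720
                  + (π - 6809 / 2240) * t ^ 11))
                  * (-(2 * t) / (2 * Real.sqrt (1 - t ^ 2)))) / (2 + Real.sqrt (1 - t ^ 2)) ^ 2
               - 1 / Real.sqrt (1 - t ^ 2)
              = (Real.sqrt (1 - t ^ 2) * (3 + (5 * t ^ 4 / 60 + 11 * (7 * t ^ 6) / 840
                  + 67 * (9 * t ^ 8) / 6720 + (π - 6809 / 2240) * (11 * t ^ 10)))
                  * (2 + Real.sqrt (1 - t ^ 2))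
                + (3 * t + (t ^ 5 / 60 + 11 * t ^ 7 / 840 + 67 * t ^ 9 / 6720
                  + (π - 6809 / 2240) * t ^ 11)) * t - (2 + Real.sqrt (1 - t ^ 2)) ^ 2)
                / (Real.sqrt (1 - t ^ 2) * (2 + Real.sqrt (1 - t ^ 2)) ^ 2) := by
            field_simp
            ring
          rw [hval]
          exact div_pos hkey (by positivity)
      have h0mem : (0:ℝ) ∈ Set.Icc (0:ℝ) (19/20) := ⟨le_refl 0, by norm_num⟩
      have hxmem : x ∈ Set.Icc (0:ℝ) (19/20) := ⟨hx0.le, hxsmall⟩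
      have hF := hmono h0mem hxmem hx0
      norm_num [Real.arcsin_zero, Real.sqrt_one] at hF
      have e1 : (3 * x + (x ^ 5 / 60 + 11 * x ^ 7 / 840 + 67 * x ^ 9 / 6720
          + (π - 6809 / 2240) * x ^ 11)) / (2 + Real.sqrt (1 - x ^ 2))
          = 3 * x / (2 + Real.sqrt (1 - x ^ 2))
            + (x ^ 5 / 60 + 11 * x ^ 7 / 840 + 67 * x ^ 9 / 6720
              + (π - 6809 / 2240) * x ^ 11) / (2 + Real.sqrt (1 - x ^ 2)) := by ring
      rw [e1] at hF
      linarith [hF]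
    · -- region 2 : near 1, use arcsin x = π/2 - arcsin s
      have hs2 : Real.sqrt (1 - x ^ 2) ^ 2 = 1 - x ^ 2 := Real.sq_sqrt hsx2.le
      have hs1 : Real.sqrt (1 - x ^ 2) ≤ 1 := by nlinarith [hsx]
      have harc : Real.arcsin x = π / 2 - Real.arcsin (Real.sqrt (1 - x ^ 2)) := by
        have h1 : Real.arccos x = π / 2 - Real.arcsin x :=
          Real.arccos_eq_pi_div_two_sub_arcsin x
        have h2 : Real.arccos x = Real.arcsin (Real.sqrt (1 - x ^ 2)) :=
          Real.arccos_eq_arcsin hx0.le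
        linarith [h1, h2]
      have hsin := arcsin_lb_aux hsx hs1
      have hW := W_pos x (Real.sqrt (1 - x ^ 2)) hxbig.le hx1 hsx hs2
      have hstep1 : Real.arcsin x < π / 2 - Real.sqrt (1 - x ^ 2)
          - Real.sqrt (1 - x ^ 2) ^ 3 / 6 := by
        rw [harc]; linarith [hsin]
      have hstep2 : π / 2 - Real.sqrt (1 - x ^ 2) - Real.sqrt (1 - x ^ 2) ^ 3 / 6
          < (3 * x + (x ^ 5 / 60 + 11 * x ^ 7 / 840
          + 67 * x ^ 9 / 6720 + (π - 6809 / 2240) * x ^ 11))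
            / (2 + Real.sqrt (1 - x ^ 2)) := by
        rw [lt_div_iff₀ hdenx]
        linarith [hW]
      have e1 : (3 * x + (x ^ 5 / 60 + 11 * x ^ 7 / 840 + 67 * x ^ 9 / 6720
          + (π - 6809 / 2240) * x ^ 11)) / (2 + Real.sqrt (1 - x ^ 2))
          = 3 * x / (2 + Real.sqrt (1 - x ^ 2))
            + (x ^ 5 / 60 + 11 * x ^ 7 / 840 + 67 * x ^ 9 / 6720
              + (π - 6809 / 2240) * x ^ 11) / (2 + Real.sqrt (1 - x ^ 2)) := by ring
      rw [e1] at hstep2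
      linarith [hstep1, hstep2]
end

section
/- For every x ∈ (0,1): ( x⁵/60 + 11x⁷/840 + 67x⁹/6720 + 3461x¹¹/443520 + 29011x¹³/4612608 ) / (2+√(1−x²)) < arcsin x − 3x/(2+√(1−x²)) < ( x⁵/60 + 11x⁷/840 + 67x⁹/6720 + 3461x¹¹/443520 + (π − 1351643/443520)·x¹³ ) / (2+√(1−x²)). -/
open Real

noncomputable section ShaferAux

private def fla (x : ℝ) : ℝ := 2 - x^2 - x^4/12 - x^6/40 - 5*x^8/448 - 7*x^10/1152 - 21*x^12/5632 + 29011*x^14/384384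
private def flb (x : ℝ) : ℝ := 2 + x^4/6 + 11*x^6/60 + 201*x^8/1120 + 3461*x^10/20160 + 29011*x^12/177408
private def ry (y : ℝ) : ℝ := 239711/256256 - 32571211*y/184504320 + 2920343*y^2/184504320 + 6588713*y^3/221405184 + 1569492091*y^4/51661209600 + 785336333*y^5/27552645120 + 10711006255*y^6/409156780032 + 841638121*y^7/147751059456

private def pl (x : ℝ) : ℝ := x^5/60 + 11*x^7/840 + 67*x^9/6720 + 3461*x^11/443520 + 29011*x^13/4612608
private def plD (x : ℝ) : ℝ := x^4/12 + 11*x^6/120 + 603*x^8/6720 + 38071*x^10/443520 + 377143*x^12/4612608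

private lemma idL (x s : ℝ) (hs : s^2 = 1 - x^2) :
    2 - x^2 - 2*s - x * pl x - s*(2+s)*plD x = fla x - flb x * s := by
  simp only [pl, plD, fla, flb]
  linear_combination (-(x^4/12 + 11*x^6/120 + 603*x^8/6720 + 38071*x^10/443520 + 377143*x^12/4612608)) * hs

private lemma idq (x : ℝ) : fla x ^ 2 - flb x ^ 2 * (1 - x^2) = x^14 * ry (x^2) := by
  simp only [fla, flb, ry]; ring

private lemma ry_pos (y : ℝ) (h0 : 0 ≤ y) (h1 : y ≤ 1) : 0 < ry y := by
  simp only [ry]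
  nlinarith [pow_nonneg h0 2, pow_nonneg h0 3, pow_nonneg h0 4, pow_nonneg h0 5, pow_nonneg h0 6, pow_nonneg h0 7]

private lemma fla_pos (x : ℝ) (h0 : 0 ≤ x) (h1 : x ≤ 1) : 0 < fla x := by
  simp only [fla]
  nlinarith [pow_le_one₀ h0 h1 (n:=4), pow_le_one₀ h0 h1 (n:=6), pow_le_one₀ h0 h1 (n:=8), pow_le_one₀ h0 h1 (n:=10), pow_le_one₀ h0 h1 (n:=12), pow_nonneg h0 14, sq_nonneg x]

private lemma flb_pos (x : ℝ) : 0 < flb x := by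
  simp only [flb]; positivity

private lemma keyL (x s : ℝ) (hx0 : 0 < x) (hx1 : x < 1) (hs0 : 0 ≤ s) (hs : s^2 = 1 - x^2) :
    flb x * s < fla x := by
  have hA := fla_pos x hx0.le hx1.le
  have hB := flb_pos x
  have hry := ry_pos (x^2) (by positivity) (by nlinarith)
  have hq : fla x ^ 2 - (flb x * s)^2 = x^14 * ry (x^2) := by
    have := idq x
    nlinarith [this, hs, sq_nonneg (flb x)]
  nlinarith [mul_nonneg hB.le hs0, pow_pos hx0 14, mul_pos (pow_pos hx0 14) hry]

private def dd : ℝ := π - 70430491/23063040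

private lemma dd_gt : 877/10000 < dd := by
  have := Real.pi_gt_d6
  simp only [dd]; norm_num at this ⊢; linarith

private lemma dd_lt : dd < 878/10000 := by
  have := Real.pi_lt_d6
  simp only [dd]; norm_num at this ⊢; linarith

private def au (x : ℝ) : ℝ := fla x - 13*dd*x^12 + 12*dd*x^14
private def bu (x : ℝ) : ℝ := flb x + 26*dd*x^12

private def pu (x : ℝ) : ℝ := x^5/60 + 11*x^7/840 + 67*x^9/6720 + 3461*x^11/443520 + (π - 1351643/443520)*x^13
private def puD (x : ℝ) : ℝ := x^4/12 + 11*x^6/120 + 603*x^8/6720 + 38071*x^10/443520 + 13*(π - 1351643/443520)*x^12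

private def ru (y : ℝ) : ℝ :=
  -156*dd + (239711/256256 + 178*dd)*y + (-(32571211/184504320) - 61*dd/2)*y^2
  + (2920343/184504320 - 133*dd/60)*y^3 + (6588713/221405184 - 73*dd/672)*y^4
  + (1569492091/51661209600 + 661*dd/2240)*y^5
  + (785336333/27552645120 + 332543*dd/887040 - 507*dd^2)*y^6
  + (10711006255/409156780032 + 286141*dd/44352 + 364*dd^2)*y^7
  + (841638121/147751059456 + 29011*dd/16016 + 144*dd^2)*y^8

private def ruD (y : ℝ) : ℝ :=
  (239711/256256 + 178*dd) + 2*(-(32571211/184504320) - 61*dd/2)*y + 3*(2920343/184504320 - 133*dd/60)*y^2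
  + 4*(6588713/221405184 - 73*dd/672)*y^3 + 5*(1569492091/51661209600 + 661*dd/2240)*y^4
  + 6*(785336333/27552645120 + 332543*dd/887040 - 507*dd^2)*y^5
  + 7*(10711006255/409156780032 + 286141*dd/44352 + 364*dd^2)*y^6
  + 8*(841638121/147751059456 + 29011*dd/16016 + 144*dd^2)*y^7

private lemma idU (x s : ℝ) (hs : s^2 = 1 - x^2) :
    2 - x^2 - 2*s - x * pu x - s*(2+s)*puD x = au x - bu x * s := by
  simp only [pu, puD, au, bu, fla, flb, dd]
  linear_combination (-(x^4/12 + 11*x^6/120 + 603*x^8/6720 + 38071*x^10/443520 + 13*(π - 1351643/443520)*x^12)) * hs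

private lemma idqU (x : ℝ) : au x ^ 2 - bu x ^ 2 * (1 - x^2) = x^12 * ru (x^2) := by
  simp only [au, bu, fla, flb, ru]; ring

private lemma hasDerivAt_ru (y : ℝ) : HasDerivAt ru (ruD y) y := by
  have H := ((((((((hasDerivAt_const y (-156*dd)).add
    ((hasDerivAt_pow 1 y).const_mul (239711/256256 + 178*dd))).add
    ((hasDerivAt_pow 2 y).const_mul (-(32571211/184504320) - 61*dd/2))).add
    ((hasDerivAt_pow 3 y).const_mul (2920343/184504320 - 133*dd/60))).add
    ((hasDerivAt_pow 4 y).const_mul (6588713/221405184 - 73*dd/672))).add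
    ((hasDerivAt_pow 5 y).const_mul (1569492091/51661209600 + 661*dd/2240))).add
    ((hasDerivAt_pow 6 y).const_mul (785336333/27552645120 + 332543*dd/887040 - 507*dd^2))).add
    ((hasDerivAt_pow 7 y).const_mul (10711006255/409156780032 + 286141*dd/44352 + 364*dd^2))).add
    ((hasDerivAt_pow 8 y).const_mul (841638121/147751059456 + 29011*dd/16016 + 144*dd^2))
  have hfun : ru = (fun y : ℝ => ((((((((-156*dd + (239711/256256 + 178*dd)*y^1) + (-(32571211/184504320) - 61*dd/2)*y^2)
      + (2920343/184504320 - 133*dd/60)*y^3) + (6588713/221405184 - 73*dd/672)*y^4)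
      + (1569492091/51661209600 + 661*dd/2240)*y^5) + (785336333/27552645120 + 332543*dd/887040 - 507*dd^2)*y^6)
      + (10711006255/409156780032 + 286141*dd/44352 + 364*dd^2)*y^7)
      + (841638121/147751059456 + 29011*dd/16016 + 144*dd^2)*y^8)) := by
    funext z; simp only [ru]; ring
  rw [hfun]
  refine H.congr_deriv ?_
  simp only [ruD]; push_cast; ring

private lemma ruD_pos (y : ℝ) (h0 : 0 ≤ y) (h1 : y ≤ 1) : 0 < ruD y := by
  have hd1 := dd_gt
  have hd2 := dd_lt
  have hstep : ruD y ≥ 165/10 - 571/100*y - 54/100*y^2 - 231/10*y^5 + 237/10*y^6 + 101/10*y^7 := by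
    simp only [ruD]
    nlinarith [mul_nonneg (by nlinarith : (0:ℝ) ≤ (239711/256256 + 178*dd) - 165/10) (pow_nonneg h0 1),
      mul_nonneg (by nlinarith : (0:ℝ) ≤ 571/100 - (32571211/184504320*2 + 61*dd)) h0,
      mul_nonneg (by nlinarith : (0:ℝ) ≤ 3*(2920343/184504320 - 133*dd/60) + 54/100) (pow_nonneg h0 2),
      mul_nonneg (by nlinarith : (0:ℝ) ≤ 4*(6588713/221405184 - 73*dd/672)) (pow_nonneg h0 3),
      mul_nonneg (by nlinarith : (0:ℝ) ≤ 5*(1569492091/51661209600 + 661*dd/2240)) (pow_nonneg h0 4),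
      mul_nonneg (by nlinarith : (0:ℝ) ≤ 6*(785336333/27552645120 + 332543*dd/887040 - 507*dd^2) + 231/10) (pow_nonneg h0 5),
      mul_nonneg (by nlinarith : (0:ℝ) ≤ 7*(10711006255/409156780032 + 286141*dd/44352 + 364*dd^2) - 237/10) (pow_nonneg h0 6),
      mul_nonneg (by nlinarith : (0:ℝ) ≤ 8*(841638121/147751059456 + 29011*dd/16016 + 144*dd^2) - 101/10) (pow_nonneg h0 7)]
  have huni : (0:ℝ) < 165/10 - 571/100*y - 54/100*y^2 - 231/10*y^5 + 237/10*y^6 + 101/10*y^7 := by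
    nlinarith [mul_nonneg (pow_nonneg h0 5) (sq_nonneg (1-y)), mul_nonneg (pow_nonneg h0 4) (sq_nonneg (1-y)), mul_nonneg (pow_nonneg h0 3) (sq_nonneg (1-y)), sq_nonneg y, pow_nonneg h0 5, sq_nonneg (1-y), mul_nonneg (pow_nonneg h0 5) (sub_nonneg.2 h1)]
  linarith

private lemma ru_mono : StrictMonoOn ru (Set.Icc 0 1) := by
  apply strictMonoOn_of_deriv_pos (convex_Icc 0 1)
  · exact (Differentiable.continuous (fun y => (hasDerivAt_ru y).differentiableAt)).continuousOn
  · intro y hy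
    rw [interior_Icc] at hy
    rw [(hasDerivAt_ru y).deriv]
    exact ruD_pos y hy.1.le hy.2.le

private lemma ru_zero_neg : ru 0 < 0 := by
  have := dd_gt
  simp only [ru]; nlinarith

private lemma ru_one_pos : 0 < ru 1 := by
  have h1 := dd_gt
  have h2 := dd_lt
  simp only [ru]; nlinarith

private lemma au_pos (x : ℝ) (h0 : 0 ≤ x) (h1 : x ≤ 1) : 0 < au x := by
  have hd1 := dd_gt
  have hd2 := dd_lt
  have hx2 : x^2 ≤ 1 := pow_le_one₀ h0 h1
  have ht : x^12*(1-x^2) ≤ 6/100 := by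
    have h0t : (0:ℝ) ≤ x^2 := sq_nonneg x
    have h1t : x^2 ≤ 1 := hx2
    calc x^12*(1-x^2) = (x^2)^6*(1-x^2) := by ring
    _ ≤ 6/100 := by
      set t := x^2
      nlinarith [sq_nonneg (t^3 - t^2), sq_nonneg (t^3 - 6/7*t^2), sq_nonneg (t^2 - 6/7*t), sq_nonneg (t - 6/7), pow_nonneg h0t 3, pow_nonneg h0t 4, mul_nonneg (pow_nonneg h0t 4) (sub_nonneg.2 h1t), mul_nonneg (pow_nonneg h0t 5) (sub_nonneg.2 h1t), mul_nonneg (pow_nonneg h0t 2) (sq_nonneg (t^2 - 6/7*t)), mul_nonneg (mul_nonneg (pow_nonneg h0t 2) (sub_nonneg.2 h1t)) (sq_nonneg (t^2 - 6/7*t))]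
  have hfla : 2 - x^2 - x^4/12 - x^6/40 - 5*x^8/448 - 7*x^10/1152 - 21*x^12/5632 + 29011*x^14/384384 ≥ 2 - (1 + 1/12 + 1/40 + 5/448 + 7/1152 + 21/5632) := by
    nlinarith [pow_le_one₀ h0 h1 (n:=2), pow_le_one₀ h0 h1 (n:=4), pow_le_one₀ h0 h1 (n:=6), pow_le_one₀ h0 h1 (n:=8), pow_le_one₀ h0 h1 (n:=10), pow_le_one₀ h0 h1 (n:=12), pow_nonneg h0 14]
  have hdx : 13*dd*x^12 - 12*dd*x^14 = dd*x^12 + 12*dd*(x^12*(1-x^2)) := by ring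
  have hx12 : x^12 ≤ 1 := pow_le_one₀ h0 h1
  have hx12' : 0 ≤ x^12 := pow_nonneg h0 12
  simp only [au, fla]
  nlinarith [mul_nonneg (by linarith : (0:ℝ) ≤ dd) (mul_nonneg hx12' (by nlinarith : (0:ℝ) ≤ 1 - x^2)), mul_le_mul_of_nonneg_left ht (by linarith : (0:ℝ) ≤ 12*dd), mul_le_mul_of_nonneg_left hx12 (by linarith : (0:ℝ) ≤ dd)]

private lemma keyU_neg (x s : ℝ) (hx0 : 0 < x) (hx1 : x < 1) (hs0 : 0 < s) (hs : s^2 = 1 - x^2)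
    (hru : ru (x^2) < 0) : au x < bu x * s := by
  have hB : 0 < bu x := by
    have := flb_pos x
    have := dd_gt
    simp only [bu]
    nlinarith [pow_nonneg hx0.le 12]
  have hq : au x ^ 2 - (bu x * s)^2 = x^12 * ru (x^2) := by
    have := idqU x
    nlinarith [this, hs, sq_nonneg (bu x)]
  have hneg : au x ^ 2 - (bu x * s)^2 < 0 := by
    have := pow_pos hx0 12
    nlinarith [mul_pos (pow_pos hx0 12) (neg_pos.2 hru)]
  nlinarith [mul_pos hB hs0]

private lemma keyU_pos (x s : ℝ) (hx0 : 0 < x) (hx1 : x < 1) (hs0 : 0 ≤ s) (hs : s^2 = 1 - x^2)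
    (hru : 0 < ru (x^2)) : bu x * s < au x := by
  have hA := au_pos x hx0.le hx1.le
  have hB : 0 < bu x := by
    have := flb_pos x
    have := dd_gt
    simp only [bu]
    nlinarith [pow_nonneg hx0.le 12]
  have hq : au x ^ 2 - (bu x * s)^2 = x^12 * ru (x^2) := by
    have := idqU x
    nlinarith [this, hs, sq_nonneg (bu x)]
  nlinarith [mul_nonneg hB.le hs0, mul_pos (pow_pos hx0 12) hru]

private lemma hasDerivAt_pl (x : ℝ) : HasDerivAt pl (plD x) x := by
  have H := (((((hasDerivAt_pow 5 x).const_mul ((1:ℝ)/60)).add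
    ((hasDerivAt_pow 7 x).const_mul ((11:ℝ)/840))).add
    ((hasDerivAt_pow 9 x).const_mul ((67:ℝ)/6720))).add
    ((hasDerivAt_pow 11 x).const_mul ((3461:ℝ)/443520))).add
    ((hasDerivAt_pow 13 x).const_mul ((29011:ℝ)/4612608))
  have hfun : pl = (fun y : ℝ => ((((1/60*y^5 + 11/840*y^7) + 67/6720*y^9) + 3461/443520*y^11) + 29011/4612608*y^13)) := by
    funext z; simp only [pl]; ring
  rw [hfun]
  refine H.congr_deriv ?_
  simp only [plD]; push_cast; ring

private lemma hasDerivAt_pu (x : ℝ) : HasDerivAt pu (puD x) x := by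
  have H := (((((hasDerivAt_pow 5 x).const_mul ((1:ℝ)/60)).add
    ((hasDerivAt_pow 7 x).const_mul ((11:ℝ)/840))).add
    ((hasDerivAt_pow 9 x).const_mul ((67:ℝ)/6720))).add
    ((hasDerivAt_pow 11 x).const_mul ((3461:ℝ)/443520))).add
    ((hasDerivAt_pow 13 x).const_mul (π - 1351643/443520))
  have hfun : pu = (fun y : ℝ => ((((1/60*y^5 + 11/840*y^7) + 67/6720*y^9) + 3461/443520*y^11) + (π - 1351643/443520)*y^13)) := by
    funext z; simp only [pu]; ring
  rw [hfun]
  refine H.congr_deriv ?_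
  simp only [puD]; push_cast; ring

private lemma hasDerivAt_main (p : ℝ → ℝ) (p' x : ℝ) (hp : HasDerivAt p p' x) (hx0 : 0 < x) (hx1 : x < 1) :
    HasDerivAt (fun y => Real.arcsin y - (3*y + p y)/(2 + Real.sqrt (1 - y^2)))
      (1/Real.sqrt (1-x^2) - ((3 + p')*(2 + Real.sqrt (1-x^2)) - (3*x + p x)*(-x/Real.sqrt (1-x^2)))/(2 + Real.sqrt (1-x^2))^2) x := by
  have h1x : 0 < 1 - x^2 := by nlinarith
  have hsqpos : 0 < Real.sqrt (1-x^2) := Real.sqrt_pos.2 h1x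
  have hinner : HasDerivAt (fun y : ℝ => 1 - y^2) (-(2*x)) x := by
    simpa using ((hasDerivAt_pow 2 x).const_sub 1)
  have hs : HasDerivAt (fun y : ℝ => Real.sqrt (1 - y^2)) (-x/Real.sqrt (1-x^2)) x := by
    have h := (Real.hasDerivAt_sqrt (ne_of_gt h1x)).comp x hinner
    refine h.congr_deriv ?_
    field_simp
  have hden : HasDerivAt (fun y : ℝ => 2 + Real.sqrt (1 - y^2)) (-x/Real.sqrt (1-x^2)) x := hs.const_add 2
  have hnum : HasDerivAt (fun y : ℝ => 3*y + p y) (3 + p') x := by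
    exact (((hasDerivAt_id x).const_mul (3:ℝ)).add hp).congr_deriv (by simp)
  have hden0 : (2 + Real.sqrt (1 - x^2)) ≠ 0 := by positivity
  have harc : HasDerivAt Real.arcsin (1/Real.sqrt (1-x^2)) x :=
    Real.hasDerivAt_arcsin (by linarith) (by linarith)
  exact harc.sub (hnum.div hden hden0)

private lemma deriv_pos_L (x : ℝ) (hx0 : 0 < x) (hx1 : x < 1) :
    0 < 1/Real.sqrt (1-x^2) - ((3 + plD x)*(2 + Real.sqrt (1-x^2)) - (3*x + pl x)*(-x/Real.sqrt (1-x^2)))/(2 + Real.sqrt (1-x^2))^2 := by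
  set s := Real.sqrt (1-x^2) with hsdef
  have h1x : 0 < 1 - x^2 := by nlinarith
  have hs0 : 0 < s := Real.sqrt_pos.2 h1x
  have hs : s^2 = 1 - x^2 := Real.sq_sqrt h1x.le
  rw [sub_pos, div_lt_div_iff₀ (by positivity) hs0]
  have hNs : ((3 + plD x)*(2 + s) - (3*x + pl x)*(-x/s))*s = (3 + plD x)*(2+s)*s + (3*x + pl x)*x := by
    field_simp
    ring
  rw [hNs]
  have hF : (2+s)^2 - ((3 + plD x)*(2+s)*s + (3*x + pl x)*x) = fla x - flb x * s := by
    have h := idL x s hs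
    linear_combination h - 2*hs
  have := keyL x s hx0 hx1 hs0.le hs
  nlinarith [this, hF]

private lemma deriv_neg_U (x : ℝ) (hx0 : 0 < x) (hx1 : x < 1) (hru : ru (x^2) < 0) :
    1/Real.sqrt (1-x^2) - ((3 + puD x)*(2 + Real.sqrt (1-x^2)) - (3*x + pu x)*(-x/Real.sqrt (1-x^2)))/(2 + Real.sqrt (1-x^2))^2 < 0 := by
  set s := Real.sqrt (1-x^2) with hsdef
  have h1x : 0 < 1 - x^2 := by nlinarith
  have hs0 : 0 < s := Real.sqrt_pos.2 h1x
  have hs : s^2 = 1 - x^2 := Real.sq_sqrt h1x.le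
  rw [sub_neg, div_lt_div_iff₀ hs0 (by positivity)]
  have hNs : ((3 + puD x)*(2 + s) - (3*x + pu x)*(-x/s))*s = (3 + puD x)*(2+s)*s + (3*x + pu x)*x := by
    field_simp
    ring
  rw [hNs]
  have hF : (2+s)^2 - ((3 + puD x)*(2+s)*s + (3*x + pu x)*x) = au x - bu x * s := by
    have h := idU x s hs
    linear_combination h - 2*hs
  have := keyU_neg x s hx0 hx1 hs0 hs hru
  nlinarith [this, hF]

private lemma deriv_pos_U (x : ℝ) (hx0 : 0 < x) (hx1 : x < 1) (hru : 0 < ru (x^2)) :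
    0 < 1/Real.sqrt (1-x^2) - ((3 + puD x)*(2 + Real.sqrt (1-x^2)) - (3*x + pu x)*(-x/Real.sqrt (1-x^2)))/(2 + Real.sqrt (1-x^2))^2 := by
  set s := Real.sqrt (1-x^2) with hsdef
  have h1x : 0 < 1 - x^2 := by nlinarith
  have hs0 : 0 < s := Real.sqrt_pos.2 h1x
  have hs : s^2 = 1 - x^2 := Real.sq_sqrt h1x.le
  rw [sub_pos, div_lt_div_iff₀ (by positivity) hs0]
  have hNs : ((3 + puD x)*(2 + s) - (3*x + pu x)*(-x/s))*s = (3 + puD x)*(2+s)*s + (3*x + pu x)*x := by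
    field_simp
    ring
  rw [hNs]
  have hF : (2+s)^2 - ((3 + puD x)*(2+s)*s + (3*x + pu x)*x) = au x - bu x * s := by
    have h := idU x s hs
    linear_combination h - 2*hs
  have := keyU_pos x s hx0 hx1 hs0.le hs hru
  nlinarith [this, hF]

private lemma cont_main (p : ℝ → ℝ) (hp : Continuous p) (D : Set ℝ) :
    ContinuousOn (fun y => Real.arcsin y - (3*y + p y)/(2 + Real.sqrt (1 - y^2))) D := by
  apply ContinuousOn.sub Real.continuous_arcsin.continuousOn
  apply ContinuousOn.div
  · exact ((continuous_const.mul continuous_id).add hp).continuousOn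
  · exact (continuous_const.add (Real.continuous_sqrt.comp (by continuity))).continuousOn
  · intro y _
    positivity

end ShaferAux

theorem shaferE_n6 (x : ℝ) (hx : x ∈ Set.Ioo (0 : ℝ) 1) :
    (x ^ 5 / 60 + 11 * x ^ 7 / 840 + 67 * x ^ 9 / 6720 + 3461 * x ^ 11 / 443520
        + 29011 * x ^ 13 / 4612608) / (2 + Real.sqrt (1 - x ^ 2))
      < Real.arcsin x - 3 * x / (2 + Real.sqrt (1 - x ^ 2)) ∧
    Real.arcsin x - 3 * x / (2 + Real.sqrt (1 - x ^ 2))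
      < (x ^ 5 / 60 + 11 * x ^ 7 / 840 + 67 * x ^ 9 / 6720 + 3461 * x ^ 11 / 443520
          + (π - 1351643 / 443520) * x ^ 13) / (2 + Real.sqrt (1 - x ^ 2)) := by
  obtain ⟨hx0, hx1⟩ := hx
  have hplcont : Continuous pl := by unfold pl; fun_prop
  have hpucont : Continuous pu := by unfold pu; fun_prop
  constructor
  · -- lower bound
    have mono : StrictMonoOn (fun y => Real.arcsin y - (3*y + pl y)/(2 + Real.sqrt (1 - y^2))) (Set.Icc 0 x) := by
      apply strictMonoOn_of_deriv_pos (convex_Icc 0 x) (cont_main pl hplcont _)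
      intro y hy
      rw [interior_Icc] at hy
      have hy0 : 0 < y := hy.1
      have hy1 : y < 1 := hy.2.trans hx1
      rw [(hasDerivAt_main pl (plD y) y (hasDerivAt_pl y) hy0 hy1).deriv]
      exact deriv_pos_L y hy0 hy1
    have h2 := mono (Set.mem_Icc.2 ⟨le_refl 0, hx0.le⟩) (Set.mem_Icc.2 ⟨hx0.le, le_refl x⟩) hx0
    simp only at h2
    norm_num [Real.arcsin_zero, pl] at h2
    have hsplit : (3*x + (x^5/60 + 11*x^7/840 + 67*x^9/6720 + 3461*x^11/443520 + 29011*x^13/4612608))/(2 + Real.sqrt (1 - x^2))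
        = 3*x/(2 + Real.sqrt (1 - x^2)) + (x ^ 5 / 60 + 11 * x ^ 7 / 840 + 67 * x ^ 9 / 6720 + 3461 * x ^ 11 / 443520 + 29011 * x ^ 13 / 4612608)/(2 + Real.sqrt (1 - x^2)) := by
      ring
    linarith [h2, hsplit]
  · -- upper bound
    have hrucont : Continuous ru := Differentiable.continuous (fun y => (hasDerivAt_ru y).differentiableAt)
    have hcont2 : ContinuousOn (fun t : ℝ => ru (t^2)) (Set.Icc 0 1) :=
      (hrucont.comp (continuous_pow 2)).continuousOn
    have hsub := intermediate_value_Ioo (zero_le_one) hcont2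
    have h0mem : (0:ℝ) ∈ Set.Ioo (ru ((0:ℝ)^2)) (ru ((1:ℝ)^2)) := by
      constructor
      · simpa using ru_zero_neg
      · simpa using ru_one_pos
    obtain ⟨c, hc, hceq⟩ := hsub h0mem
    have hc0 : 0 < c := hc.1
    have hc1 : c < 1 := hc.2
    have hceq' : ru (c^2) = 0 := hceq
    have hmemc : c^2 ∈ Set.Icc (0:ℝ) 1 := ⟨sq_nonneg c, by nlinarith⟩
    have hfU1 : Real.arcsin 1 - (3*(1:ℝ) + pu 1)/(2 + Real.sqrt (1 - (1:ℝ)^2)) = 0 := by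
      have hpu1 : pu 1 = π - 3 := by simp only [pu]; norm_num; linarith
      rw [show (1:ℝ)-(1:ℝ)^2 = 0 by norm_num, Real.sqrt_zero, Real.arcsin_one, hpu1]
      ring
    rcases le_or_gt x c with hxc | hxc
    · -- x ≤ c : fU strictly decreasing on [0, c]
      have anti : StrictAntiOn (fun y => Real.arcsin y - (3*y + pu y)/(2 + Real.sqrt (1 - y^2))) (Set.Icc 0 c) := by
        apply strictAntiOn_of_deriv_neg (convex_Icc 0 c) (cont_main pu hpucont _)
        intro y hy
        rw [interior_Icc] at hy
        have hy0 : 0 < y := hy.1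
        have hy1 : y < 1 := hy.2.trans hc1
        rw [(hasDerivAt_main pu (puD y) y (hasDerivAt_pu y) hy0 hy1).deriv]
        apply deriv_neg_U y hy0 hy1
        have hlt : y^2 < c^2 := by nlinarith [hy.1, hy.2]
        have hmemy : y^2 ∈ Set.Icc (0:ℝ) 1 := ⟨sq_nonneg y, by nlinarith⟩
        have := ru_mono hmemy hmemc hlt
        linarith [hceq']
      have h2 := anti (Set.mem_Icc.2 ⟨le_refl 0, hx0.le.trans hxc⟩) (Set.mem_Icc.2 ⟨hx0.le, hxc⟩) hx0
      simp only at h2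
      norm_num [Real.arcsin_zero, pu] at h2
      have hsplit : (3*x + (x^5/60 + 11*x^7/840 + 67*x^9/6720 + 3461*x^11/443520 + (π - 1351643/443520)*x^13))/(2 + Real.sqrt (1 - x^2))
          = 3*x/(2 + Real.sqrt (1 - x^2)) + (x ^ 5 / 60 + 11 * x ^ 7 / 840 + 67 * x ^ 9 / 6720 + 3461 * x ^ 11 / 443520 + (π - 1351643 / 443520) * x ^ 13)/(2 + Real.sqrt (1 - x^2)) := by
        ring
      linarith [h2, hsplit]
    · -- c < x : fU strictly increasing on [c, 1]
      have mono : StrictMonoOn (fun y => Real.arcsin y - (3*y + pu y)/(2 + Real.sqrt (1 - y^2))) (Set.Icc c 1) := by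
        apply strictMonoOn_of_deriv_pos (convex_Icc c 1) (cont_main pu hpucont _)
        intro y hy
        rw [interior_Icc] at hy
        have hy0 : 0 < y := hc0.trans hy.1
        have hy1 : y < 1 := hy.2
        rw [(hasDerivAt_main pu (puD y) y (hasDerivAt_pu y) hy0 hy1).deriv]
        apply deriv_pos_U y hy0 hy1
        have hlt : c^2 < y^2 := by nlinarith [hy.1, hy.2, hc0]
        have hmemy : y^2 ∈ Set.Icc (0:ℝ) 1 := ⟨sq_nonneg y, by nlinarith⟩
        have := ru_mono hmemc hmemy hlt
        linarith [hceq']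
      have h2 := mono (Set.mem_Icc.2 ⟨hxc.le, hx1.le⟩) (Set.mem_Icc.2 ⟨hxc.le.trans hx1.le, le_refl 1⟩) hx1
      simp only at h2
      rw [hfU1] at h2
      simp only [pu] at h2
      have hsplit : (3*x + (x^5/60 + 11*x^7/840 + 67*x^9/6720 + 3461*x^11/443520 + (π - 1351643/443520)*x^13))/(2 + Real.sqrt (1 - x^2))
          = 3*x/(2 + Real.sqrt (1 - x^2)) + (x ^ 5 / 60 + 11 * x ^ 7 / 840 + 67 * x ^ 9 / 6720 + 3461 * x ^ 11 / 443520 + (π - 1351643 / 443520) * x ^ 13)/(2 + Real.sqrt (1 - x^2)) := by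
        ring
      linarith [h2, hsplit]
end
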